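/- Let X be a real Hilbert space and Φ : X → X demicontinuous with the (S₊) property. If x₀ is an isolated zero of Φ (some ball B_{r}(x₀) contains no other zeros), then x₀ is a strictly isolated zero: there exists r₀ > 0 such that every sequence xₙ with Φxₙ → 0 in norm and ‖xₙ − x₀‖ ≤ r₀ satisfies xₙ → x₀ in norm. -/

import Mathlib

open Filter Topology

local notation "⟪" x ", " y "⟫" => @inner ℝ _ _ x y

variable {X : Type*} [NormedAddCommGroup X] [InnerProductSpace ℝ X] [CompleteSpace X]

lemma exists_weak_subseq (x : ℕ → X) (M : ℝ) (hM : ∀ n, ‖x n‖ ≤ M) :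
    ∃ (φ : ℕ → ℕ) (y : X), StrictMono φ ∧
      ∀ z : X, Tendsto (fun n => ⟪x (φ n), z⟫) atTop (nhds ⟪y, z⟫) := by
  have hM0 : 0 ≤ M := (norm_nonneg _).trans (hM 0)
  set g : ℕ → ℕ → ℝ := fun n m => ⟪x n, x m⟫ with hg
  have hgmem : ∀ n, g n ∈ Set.pi Set.univ (fun _ : ℕ => Set.Icc (-(M * M)) (M * M)) := by
    intro n m _
    have h1 := abs_real_inner_le_norm (x n) (x m)
    have h2 : ‖x n‖ * ‖x m‖ ≤ M * M :=
      mul_le_mul (hM n) (hM m) (norm_nonneg _) hM0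
    constructor
    · have := neg_abs_le (g n m); simp only [hg] at *; linarith
    · have := le_abs_self (g n m); simp only [hg] at *; linarith
  obtain ⟨L, -, φ, hφ, hL⟩ :=
    (isCompact_univ_pi (fun _ : ℕ => isCompact_Icc)).isSeqCompact hgmem
  rw [tendsto_pi_nhds] at hL
  -- hL : ∀ m, Tendsto (fun n => g (φ n) m) atTop (nhds (L m))
  set A : Set X := {z | ∃ c : ℝ, Tendsto (fun n => ⟪x (φ n), z⟫) atTop (nhds c)} with hA
  have hxA : ∀ m, x m ∈ A := fun m => ⟨L m, hL m⟩
  have hA0 : (0 : X) ∈ A := ⟨0, by simpa using tendsto_const_nhds⟩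
  have hAadd : ∀ u v : X, u ∈ A → v ∈ A → u + v ∈ A := by
    rintro u v ⟨c, hc⟩ ⟨d, hd⟩
    exact ⟨c + d, by simpa [inner_add_right] using hc.add hd⟩
  have hAsmul : ∀ (a : ℝ) (u : X), u ∈ A → a • u ∈ A := by
    rintro a u ⟨c, hc⟩
    exact ⟨a * c, by simpa [inner_smul_right] using hc.const_mul a⟩
  have hspan : (Submodule.span ℝ (Set.range x) : Set X) ⊆ A := by
    intro z hz
    refine Submodule.span_induction (p := fun z _ => z ∈ A) ?_ hA0
      (fun u v _ _ hu hv => hAadd u v hu hv) (fun a u _ hu => hAsmul a u hu) hz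
    rintro _ ⟨m, rfl⟩; exact hxA m
  have hclosure : closure A ⊆ A := by
    intro y hy
    have hcauchy : CauchySeq (fun n => ⟪x (φ n), y⟫) := by
      rw [Metric.cauchySeq_iff]
      intro ε hε
      obtain ⟨z, hzA, hzy⟩ := Metric.mem_closure_iff.mp hy (ε / (3 * (M + 1))) (by positivity)
      obtain ⟨c, hc⟩ := hzA
      obtain ⟨N, hN⟩ := Metric.cauchySeq_iff.mp hc.cauchySeq (ε / 3) (by linarith)
      refine ⟨N, fun m hm n hn => ?_⟩
      have key : ⟪x (φ m), y⟫ - ⟪x (φ n), y⟫ =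
          ⟪x (φ m), y - z⟫ + (⟪x (φ m), z⟫ - ⟪x (φ n), z⟫) + ⟪x (φ n), z - y⟫ := by
        simp only [inner_sub_right]; ring
      have hyz : ‖y - z‖ < ε / (3 * (M + 1)) := by
        rw [← dist_eq_norm]; exact hzy
      have b1 : |⟪x (φ m), y - z⟫| ≤ M * ‖y - z‖ :=
        (abs_real_inner_le_norm _ _).trans
          (mul_le_mul_of_nonneg_right (hM _) (norm_nonneg _))
      have b3 : |⟪x (φ n), z - y⟫| ≤ M * ‖y - z‖ := by
        refine (abs_real_inner_le_norm _ _).trans ?_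
        rw [norm_sub_rev]
        exact mul_le_mul_of_nonneg_right (hM _) (norm_nonneg _)
      have b2 : |⟪x (φ m), z⟫ - ⟪x (φ n), z⟫| < ε / 3 := by
        have := hN m hm n hn; rwa [Real.dist_eq] at this
      rw [Real.dist_eq, key]
      have habs : |⟪x (φ m), y - z⟫ + (⟪x (φ m), z⟫ - ⟪x (φ n), z⟫) + ⟪x (φ n), z - y⟫|
          ≤ |⟪x (φ m), y - z⟫| + |⟪x (φ m), z⟫ - ⟪x (φ n), z⟫| + |⟪x (φ n), z - y⟫| :=
        (abs_add_le _ _).trans (by gcongr; exact abs_add_le _ _)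
      have hMd : M * ‖y - z‖ < ε / 3 := by
        have h1 : M * ‖y - z‖ ≤ (M + 1) * ‖y - z‖ := by nlinarith [norm_nonneg (y - z)]
        have h2 : (M + 1) * ‖y - z‖ < (M + 1) * (ε / (3 * (M + 1))) := by
          exact mul_lt_mul_of_pos_left hyz (by linarith)
        have hne : M + 1 ≠ 0 := by positivity
        have h3 : (M + 1) * (ε / (3 * (M + 1))) = ε / 3 := by
          field_simp
        linarith
      linarith
    obtain ⟨c, hc⟩ := cauchySeq_tendsto_of_complete hcauchy
    exact ⟨c, hc⟩
  have hAuniv : ∀ z : X, z ∈ A := by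
    intro z
    set K := (Submodule.span ℝ (Set.range x)).topologicalClosure with hK
    haveI : CompleteSpace K :=
      (Submodule.span ℝ (Set.range x)).isClosed_topologicalClosure.completeSpace_coe
    have hxK : ∀ n, x n ∈ K := fun n =>
      Submodule.le_topologicalClosure _ (Submodule.subset_span ⟨n, rfl⟩)
    set p : X := (K.orthogonalProjectionOnto z : X) with hp
    have hpA : p ∈ A := by
      apply hclosure
      apply closure_mono hspan
      have hmem : p ∈ K := (K.orthogonalProjectionOnto z).2
      rw [← Submodule.topologicalClosure_coe]
      exact hmem
    have horth : ∀ n, ⟪x n, z⟫ = ⟪x n, p⟫ := by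
      intro n
      have h1 : z - p ∈ Kᗮ := Submodule.sub_starProjection_mem_orthogonal (K := K) z
      have h2 : ⟪x n, z - p⟫ = 0 := (Submodule.mem_orthogonal K _).mp h1 (x n) (hxK n)
      rw [inner_sub_right] at h2; linarith
    obtain ⟨c, hc⟩ := hpA
    exact ⟨c, by simpa only [horth] using hc⟩
  choose c hc using hAuniv
  have hbound : ∀ z : X, |c z| ≤ M * ‖z‖ := by
    intro z
    refine le_of_tendsto (hc z).abs (Eventually.of_forall fun n => ?_)
    exact (abs_real_inner_le_norm _ _).trans
      (mul_le_mul_of_nonneg_right (hM _) (norm_nonneg _))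
  have hadd : ∀ u v : X, c (u + v) = c u + c v := by
    intro u v
    refine tendsto_nhds_unique (hc (u + v)) ?_
    simpa [inner_add_right] using (hc u).add (hc v)
  have hsmul : ∀ (a : ℝ) (u : X), c (a • u) = a * c u := by
    intro a u
    refine tendsto_nhds_unique (hc (a • u)) ?_
    simpa [inner_smul_right] using (hc u).const_mul a
  let F : X →ₗ[ℝ] ℝ :=
    { toFun := c
      map_add' := hadd
      map_smul' := hsmul }
  let F' : X →L[ℝ] ℝ := F.mkContinuous M fun z => by
    simpa [F, Real.norm_eq_abs] using hbound z
  refine ⟨φ, (InnerProductSpace.toDual ℝ X).symm F', hφ, fun z => ?_⟩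
  have h : ⟪(InnerProductSpace.toDual ℝ X).symm F', z⟫ = F' z :=
    InnerProductSpace.toDual_symm_apply
  rw [h]
  exact hc z
/-- Weak convergence of a sequence in a Hilbert space. -/
def WeakConv (x : ℕ → X) (x₀ : X) : Prop :=
  ∀ y : X, Tendsto (fun n => ⟪x n, y⟫) atTop (nhds ⟪x₀, y⟫)

/-- `limsup aₙ ≤ 0` for a real sequence (in the extended-real sense). -/
def LimsupLE0 (a : ℕ → ℝ) : Prop := ∀ ε : ℝ, 0 < ε → ∀ᶠ n in atTop, a n ≤ ε

/-- `limsup aₙ ≥ 0` for a real sequence (in the extended-real sense). -/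
def LimsupGE0 (a : ℕ → ℝ) : Prop := ∀ ε : ℝ, 0 < ε → ∃ᶠ n in atTop, -ε ≤ a n

/-- The (S₊) property. -/
def SPlus (Φ : X → X) : Prop :=
  ∀ (x : ℕ → X) (x₀ : X), WeakConv x x₀ →
    LimsupLE0 (fun n => ⟪Φ (x n), x n - x₀⟫) → Tendsto x atTop (nhds x₀)

/-- Quasimonotonicity. -/
def Quasimonotone (Φ : X → X) : Prop :=
  ∀ (x : ℕ → X) (x₀ : X), WeakConv x x₀ →
    LimsupGE0 (fun n => ⟪Φ (x n), x n - x₀⟫)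

/-- Demicontinuity: norm-to-weak sequential continuity. -/
def Demicontinuous (Φ : X → X) : Prop :=
  ∀ (x : ℕ → X) (x₀ : X), Tendsto x atTop (nhds x₀) →
    WeakConv (fun n => Φ (x n)) (Φ x₀)

theorem stmt19 (Φ : X → X) (hdemi : Demicontinuous Φ) (hS : SPlus Φ)
    (x₀ : X) (hx₀ : Φ x₀ = 0) (r : ℝ) (hr : 0 < r)
    (hisol : ∀ x ∈ Metric.ball x₀ r, Φ x = 0 → x = x₀) :
    ∃ r₀ : ℝ, 0 < r₀ ∧
      ∀ x : ℕ → X, Tendsto (fun n => Φ (x n)) atTop (nhds 0) →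
        (∀ n, ‖x n - x₀‖ ≤ r₀) → Tendsto x atTop (nhds x₀) := by
  refine ⟨r / 2, by linarith, fun x hΦx hxb => ?_⟩
  refine tendsto_of_subseq_tendsto fun ns hns => ?_
  have hb : ∀ n, ‖x (ns n)‖ ≤ ‖x₀‖ + r / 2 := by
    intro n
    have h1 : ‖x (ns n) - x₀ + x₀‖ ≤ ‖x (ns n) - x₀‖ + ‖x₀‖ := norm_add_le _ _
    simp only [sub_add_cancel] at h1
    have := hxb (ns n); linarith
  obtain ⟨φ, y, hφ, hweak⟩ := exists_weak_subseq (fun n => x (ns n)) (‖x₀‖ + r / 2) hb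
  have hΦ0 : Tendsto (fun k => Φ (x (ns (φ k)))) atTop (nhds 0) :=
    hΦx.comp (hns.comp hφ.tendsto_atTop)
  have hweak' : WeakConv (fun k => x (ns (φ k))) y := fun z => hweak z
  have hC : ∀ k, ‖x (ns (φ k)) - y‖ ≤ r / 2 + ‖x₀ - y‖ := by
    intro k
    calc ‖x (ns (φ k)) - y‖ = ‖(x (ns (φ k)) - x₀) + (x₀ - y)‖ := by rw [sub_add_sub_cancel]
      _ ≤ ‖x (ns (φ k)) - x₀‖ + ‖x₀ - y‖ := norm_add_le _ _
      _ ≤ r / 2 + ‖x₀ - y‖ := by have := hxb (ns (φ k)); linarith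
  set C : ℝ := r / 2 + ‖x₀ - y‖ with hCdef
  have hC0 : 0 ≤ C := le_trans (norm_nonneg _) (hC 0)
  have hlimsup : LimsupLE0 (fun k => ⟪Φ (x (ns (φ k))), x (ns (φ k)) - y⟫) := by
    intro ε hε
    have hn0 : Tendsto (fun k => ‖Φ (x (ns (φ k)))‖) atTop (nhds 0) := by
      simpa using hΦ0.norm
    have hev : ∀ᶠ k in atTop, ‖Φ (x (ns (φ k)))‖ < ε / (C + 1) :=
      hn0.eventually_lt_const (by positivity)
    filter_upwards [hev] with k hk
    have h1 : ⟪Φ (x (ns (φ k))), x (ns (φ k)) - y⟫ ≤ ‖Φ (x (ns (φ k)))‖ * ‖x (ns (φ k)) - y‖ :=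
      real_inner_le_norm _ _
    have h2 : ‖Φ (x (ns (φ k)))‖ * ‖x (ns (φ k)) - y‖ ≤ ‖Φ (x (ns (φ k)))‖ * C :=
      mul_le_mul_of_nonneg_left (hC k) (norm_nonneg _)
    have h5 : ‖Φ (x (ns (φ k)))‖ * C ≤ (ε / (C + 1)) * C :=
      mul_le_mul_of_nonneg_right hk.le hC0
    have h6 : (ε / (C + 1)) * C ≤ ε := by
      rw [div_mul_eq_mul_div, div_le_iff₀ (by linarith : (0:ℝ) < C + 1)]
      nlinarith
    exact h1.trans (h2.trans (h5.trans h6))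
  have hstrong : Tendsto (fun k => x (ns (φ k))) atTop (nhds y) := hS _ y hweak' hlimsup
  have hΦy : Φ y = 0 := by
    have hw2 := hdemi _ y hstrong
    have h0 : Tendsto (fun k => ⟪Φ (x (ns (φ k))), Φ y⟫) atTop (nhds 0) := by
      have := Filter.Tendsto.inner (𝕜 := ℝ) hΦ0 (tendsto_const_nhds (x := Φ y))
      simpa using this
    have := tendsto_nhds_unique (hw2 (Φ y)) h0
    exact inner_self_eq_zero.mp this
  have hyball : ‖y - x₀‖ ≤ r / 2 := by
    have hmem : ∀ k, x (ns (φ k)) ∈ Metric.closedBall x₀ (r / 2) := by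
      intro k
      rw [Metric.mem_closedBall, dist_eq_norm]
      exact hxb (ns (φ k))
    have hy : y ∈ Metric.closedBall x₀ (r / 2) :=
      Metric.isClosed_closedBall.mem_of_tendsto hstrong (Eventually.of_forall hmem)
    rwa [Metric.mem_closedBall, dist_eq_norm] at hy
  have hyx₀ : y = x₀ := by
    apply hisol y _ hΦy
    rw [Metric.mem_ball, dist_eq_norm]
    linarith
  exact ⟨φ, hyx₀ ▸ hstrong⟩
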